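/- arXiv:0807.4829 — 7 statements merged into one kernel-verified Lean document; each statement's English description precedes it below -/
import Mathlib

section
/- Let S be a finite semigroup and let a, b ∈ S. If a, b, and ab all belong to the same D-class of S, then ab lies in the intersection of the R-class of a and the L-class of b. -/
/-- Green's R relation: `a R b` iff `a S¹ = b S¹`. -/
def GreenR {S : Type*} [Semigroup S] (a b : S) : Prop :=
  (a = b ∨ ∃ u, a * u = b) ∧ (b = a ∨ ∃ u, b * u = a)

/-- Green's L relation: `a L b` iff `S¹ a = S¹ b`. -/
def GreenL {S : Type*} [Semigroup S] (a b : S) : Prop :=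
  (a = b ∨ ∃ u, u * a = b) ∧ (b = a ∨ ∃ u, u * b = a)

/-- Green's H relation. -/
def GreenH {S : Type*} [Semigroup S] (a b : S) : Prop := GreenR a b ∧ GreenL a b

/-- Green's D relation: `D = L ∘ R`. -/
def GreenD {S : Type*} [Semigroup S] (a b : S) : Prop := ∃ c, GreenL a c ∧ GreenR c b

/-- The state of the dual Cayley automaton, started in state `s`,
after reading the first `n` symbols of the sequence `a`. -/
def stateAt {S : Type*} [Semigroup S] (s : S) (a : ℕ → S) : ℕ → S
  | 0 => s
  | n + 1 => stateAt s a n * a n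

/-- The transformation of `S^∞` induced by the state `s` of the dual
Cayley automaton: in state `t`, reading symbol `x`, output `x*t` and move to `t*x`. -/
def dualAct {S : Type*} [Semigroup S] (s : S) : (ℕ → S) → (ℕ → S) :=
  fun a n => a n * stateAt s a n

/-- The dual Cayley automaton semigroup `C*(S)`, as the subsemigroup of
transformations of `S^∞` generated by the states. -/
def dualCayley (S : Type*) [Semigroup S] : Subsemigroup (Function.End (ℕ → S)) :=
  Subsemigroup.closure (Set.range (dualAct (S := S)))

/-- Apply the states of a list in order (leftmost first) to a sequence:
the action of the product of states `ā₁ ⋯ ā_k`. -/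
def applyList {S : Type*} [Semigroup S] (l : List S) (a : ℕ → S) : ℕ → S :=
  l.foldl (fun b s => dualAct s b) a

/-- Prepend a symbol to an infinite sequence. -/
def consSeq {S : Type*} (x : S) (a : ℕ → S) : ℕ → S :=
  fun n => match n with
  | 0 => x
  | n + 1 => a n

/-- The list of sections: `secList [a₁,…,a_k] x = [a₁x, a₂(xa₁), a₃(xa₁a₂), …]`,
the state to which `ā₁ ⋯ ā_k` moves after reading `x`. -/
def secList {S : Type*} [Semigroup S] : List S → S → List S
  | [], _ => []
  | a :: l, x => (a * x) :: secList l (x * a)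


section Aux

variable {M : Type*} [Monoid M] [Finite M]

/-- Every element of a finite monoid has an idempotent positive power. -/
lemma exists_idem_pow (c : M) : ∃ n, 0 < n ∧ c ^ n * c ^ n = c ^ n := by
  obtain ⟨i, j, hne, hij⟩ := Finite.exists_ne_map_eq_of_infinite (fun n : ℕ => c ^ n)
  wlog hlt : i < j generalizing i j
  · exact this j i hne.symm hij.symm (by omega)
  set p := j - i with hp
  have hp1 : 0 < p := by omega
  have step : ∀ k, i ≤ k → c ^ (k + p) = c ^ k := by
    intro k hk
    have h1 : k + p = (k - i) + j := by omega
    have h2 : k = (k - i) + i := by omega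
    have hij' : c ^ i = c ^ j := hij
    rw [h1, pow_add, ← hij', ← pow_add, ← h2]
  have mult : ∀ t k, i ≤ k → c ^ (k + t * p) = c ^ k := by
    intro t
    induction t with
    | zero => simp
    | succ t ih =>
      intro k hk
      have : k + (t + 1) * p = (k + t * p) + p := by ring
      rw [this, step _ (by omega), ih k hk]
  refine ⟨(i + 1) * p, by positivity, ?_⟩
  rw [← pow_add]
  have hle : i ≤ (i + 1) * p := by nlinarith
  exact mult (i + 1) ((i + 1) * p) hle

/-- R-stability in a finite monoid. -/
lemma stabR (x y u v : M) (h : x = u * (x * y) * v) : ∃ w, (x * y) * w = x := by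
  have h' : x = u * x * (y * v) := by
    simp only [mul_assoc] at h ⊢; exact h
  have key : ∀ n, x = u ^ n * x * (y * v) ^ n := by
    intro n
    induction n with
    | zero => simp
    | succ n ih =>
      rw [pow_succ' u n, pow_succ (y * v) n]
      calc x = u * x * (y * v) := h'
      _ = u * (u ^ n * x * (y * v) ^ n) * (y * v) := by rw [← ih]
      _ = u * u ^ n * x * ((y * v) ^ n * (y * v)) := by simp only [mul_assoc]
  obtain ⟨n, hn, hidem⟩ := exists_idem_pow (y * v)
  have hxe : x * (y * v) ^ n = x := by
    conv_lhs => rw [key n]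
    rw [mul_assoc (u ^ n * x), hidem, ← key n]
  obtain ⟨m, rfl⟩ : ∃ m, n = m + 1 := ⟨n - 1, by omega⟩
  refine ⟨v * (y * v) ^ m, ?_⟩
  rw [pow_succ'] at hxe
  simp only [mul_assoc] at hxe ⊢
  exact hxe

/-- L-stability in a finite monoid. -/
lemma stabL (x y u v : M) (h : x = u * (y * x) * v) : ∃ w, w * (y * x) = x := by
  haveI : Finite Mᵐᵒᵖ := Finite.of_equiv M MulOpposite.opEquiv
  have h' : MulOpposite.op x =
      MulOpposite.op v * (MulOpposite.op x * MulOpposite.op y) * MulOpposite.op u := by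
    conv_lhs => rw [h]
    simp only [MulOpposite.op_mul, mul_assoc]
  obtain ⟨w, hw⟩ := stabR (MulOpposite.op x) (MulOpposite.op y) (MulOpposite.op v)
    (MulOpposite.op u) h'
  refine ⟨w.unop, MulOpposite.op_injective ?_⟩
  rw [MulOpposite.op_mul, MulOpposite.op_mul, MulOpposite.op_unop]
  exact hw

end Aux

section Main

variable {S : Type*} [Semigroup S]

open WithOne

/-- Turn a "left multiple in S¹" disjunction into a statement in `WithOne S`. -/
lemma toWithOne_left {a c : S} (h : a = c ∨ ∃ u, u * a = c) :
    ∃ x : WithOne S, x * (a : WithOne S) = (c : WithOne S) := by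
  rcases h with rfl | ⟨u, rfl⟩
  · exact ⟨1, one_mul _⟩
  · exact ⟨(u : WithOne S), (WithOne.coe_mul u a).symm⟩

lemma toWithOne_right {a c : S} (h : a = c ∨ ∃ u, a * u = c) :
    ∃ x : WithOne S, (a : WithOne S) * x = (c : WithOne S) := by
  rcases h with rfl | ⟨u, rfl⟩
  · exact ⟨1, mul_one _⟩
  · exact ⟨(u : WithOne S), (WithOne.coe_mul a u).symm⟩

lemma ofWithOne_left {a c : S} (h : ∃ x : WithOne S, x * (a : WithOne S) = (c : WithOne S)) :
    a = c ∨ ∃ u, u * a = c := by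
  obtain ⟨x, hx⟩ := h
  induction x using WithOne.recOneCoe with
  | one => left; exact WithOne.coe_inj.mp (by simpa using hx)
  | coe u => right; exact ⟨u, WithOne.coe_inj.mp (by simpa using hx)⟩

lemma ofWithOne_right {a c : S} (h : ∃ x : WithOne S, (a : WithOne S) * x = (c : WithOne S)) :
    a = c ∨ ∃ u, a * u = c := by
  obtain ⟨x, hx⟩ := h
  induction x using WithOne.recOneCoe with
  | one => left; exact WithOne.coe_inj.mp (by simpa using hx)
  | coe u => right; exact ⟨u, WithOne.coe_inj.mp (by simpa using hx)⟩

end Main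

/-- If `a`, `b` and `ab` all belong to the same `D`-class of a finite semigroup,
then `ab ∈ R_a ∩ L_b`. -/
theorem stmt0 {S : Type*} [Semigroup S] [Fintype S] (a b : S)
    (hab : GreenD a b) (hprod : GreenD a (a * b)) :
    GreenR a (a * b) ∧ GreenL b (a * b) := by
  haveI : Finite (WithOne S) := Finite.of_equiv (Option S) (Equiv.refl _)
  -- extract `↑a = p * (↑a * ↑b) * q` from hprod
  obtain ⟨c, hL, hR⟩ := hprod
  obtain ⟨p, hp⟩ := toWithOne_left hL.2
  obtain ⟨q, hq⟩ := toWithOne_right hR.2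
  have ha : (a : WithOne S) = p * ((a : WithOne S) * (b : WithOne S)) * q := by
    calc (a : WithOne S) = p * (c : WithOne S) := hp.symm
    _ = p * ((a * b : S) * q : WithOne S) := by rw [hq]
    _ = p * ((a : WithOne S) * (b : WithOne S)) * q := by
      simp only [WithOne.coe_mul, mul_assoc]
  -- extract `↑b = x * ↑a * y` from hab
  obtain ⟨d, hL', hR'⟩ := hab
  obtain ⟨x, hx⟩ := toWithOne_left hL'.1
  obtain ⟨y, hy⟩ := toWithOne_right hR'.1
  have hb : (b : WithOne S) = x * (a : WithOne S) * y := by rw [hx, hy]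
  constructor
  · refine ⟨Or.inr ⟨b, rfl⟩, ?_⟩
    obtain ⟨w, hw⟩ := stabR (a : WithOne S) (b : WithOne S) p q ha
    have := ofWithOne_right ⟨w, by rw [← WithOne.coe_mul] at hw; exact hw⟩
    exact this
  · refine ⟨Or.inr ⟨a, rfl⟩, ?_⟩
    have hb' : (b : WithOne S) =
        (x * p) * ((a : WithOne S) * (b : WithOne S)) * (q * y) := by
      calc (b : WithOne S) = x * (a : WithOne S) * y := hb
      _ = x * (p * ((a : WithOne S) * (b : WithOne S)) * q) * y := by rw [← ha]
      _ = (x * p) * ((a : WithOne S) * (b : WithOne S)) * (q * y) := by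
        simp only [mul_assoc]
    obtain ⟨w, hw⟩ := stabL (b : WithOne S) (a : WithOne S) (x * p) (q * y) hb'
    have := ofWithOne_left ⟨w, by rw [← WithOne.coe_mul] at hw; exact hw⟩
    exact this
end

section
/- Let S be a finite semigroup and let c ∈ S. If c and c² are D-equivalent, then c and c² are H-equivalent, and the H-class of c is a group. -/
section Aux
variable {M : Type*} [Monoid M]

/-- In a finite monoid, every element has a positive power that is idempotent. -/
lemma aux_exists_idem_pow [Finite M] (a : M) :
    ∃ n, 0 < n ∧ a ^ n * a ^ n = a ^ n := by
  obtain ⟨i, j, hij, hpow⟩ := Finite.exists_ne_map_eq_of_infinite (fun n : ℕ => a ^ (n + 1))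
  wlog hlt : i < j generalizing i j
  · exact this j i hij.symm hpow.symm (by omega)
  set m := i + 1 with hm
  set p := j - i with hp
  have hppos : 0 < p := by omega
  have hmp : a ^ (m + p) = a ^ m := by
    have hjp : j + 1 = m + p := by omega
    rw [← hjp]
    exact hpow.symm
  -- a ^ (N + t*p) = a ^ N for N ≥ m
  have key : ∀ t N, m ≤ N → a ^ (N + t * p) = a ^ N := by
    intro t
    induction t with
    | zero => simp
    | succ t ih =>
      intro N hN
      have h1 : N + (t + 1) * p = (N + t * p - m) + (m + p) := by
        have : m ≤ N + t * p := by omega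
        ring_nf; omega
      rw [h1, pow_add, hmp, ← pow_add]
      have h2 : N + t * p - m + m = N + t * p := by omega
      rw [h2]
      exact ih N hN
  refine ⟨m * p, by positivity, ?_⟩
  rw [← pow_add]
  have : m * p + m * p = m * p + m * p := rfl
  calc a ^ (m * p + m * p) = a ^ (m * p) := key m (m * p) (Nat.le_mul_of_pos_right m hppos)

lemma aux_claimA (c p r : M) (h : c = p * c * c * r) :
    ∀ n, c = (p * c) ^ n * c * r ^ n := by
  intro n
  induction n with
  | zero => simp
  | succ n ih =>
    calc c = (p * c) ^ n * c * r ^ n := ih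
    _ = (p * c) ^ n * (p * c * c * r) * r ^ n := by rw [← h]
    _ = (p * c) ^ (n + 1) * c * r ^ (n + 1) := by
        rw [pow_succ, pow_succ']
        simp [mul_assoc]

lemma aux_claimB (c p r : M) (h : c = p * c * c * r) :
    ∀ n, c = p ^ n * c * (c * r) ^ n := by
  intro n
  induction n with
  | zero => simp
  | succ n ih =>
    calc c = p ^ n * c * (c * r) ^ n := ih
    _ = p ^ n * (p * c * c * r) * (c * r) ^ n := by rw [← h]
    _ = p ^ (n + 1) * c * (c * r) ^ (n + 1) := by
        rw [pow_succ, pow_succ']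
        simp [mul_assoc]

/-- From `c = p c c r` in a finite monoid, `c` is L-below and R-below `c²`. -/
lemma aux_main [Finite M] (c p r : M) (h : c = p * c * c * r) :
    (∃ q, q * (c * c) = c) ∧ (∃ s, (c * c) * s = c) := by
  constructor
  · obtain ⟨n, hn, hidem⟩ := aux_exists_idem_pow (p * c)
    have hA := aux_claimA c p r h n
    have hfc : (p * c) ^ n * c = c := by
      calc (p * c) ^ n * c
          = (p * c) ^ n * ((p * c) ^ n * c * r ^ n) := by rw [← hA]
        _ = ((p * c) ^ n * (p * c) ^ n) * c * r ^ n := by simp [mul_assoc]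
        _ = (p * c) ^ n * c * r ^ n := by rw [hidem]
        _ = c := hA.symm
    obtain ⟨k, rfl⟩ : ∃ k, n = k + 1 := ⟨n - 1, by omega⟩
    refine ⟨(p * c) ^ k * p, ?_⟩
    have : (p * c) ^ (k + 1) * c = (p * c) ^ k * p * (c * c) := by
      rw [pow_succ]; simp [mul_assoc]
    rw [← this, hfc]
  · obtain ⟨n, hn, hidem⟩ := aux_exists_idem_pow (c * r)
    have hB := aux_claimB c p r h n
    have hcf : c * (c * r) ^ n = c := by
      calc c * (c * r) ^ n
          = (p ^ n * c * (c * r) ^ n) * (c * r) ^ n := by rw [← hB]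
        _ = p ^ n * c * ((c * r) ^ n * (c * r) ^ n) := by simp [mul_assoc]
        _ = p ^ n * c * (c * r) ^ n := by rw [hidem]
        _ = c := hB.symm
    obtain ⟨k, rfl⟩ : ∃ k, n = k + 1 := ⟨n - 1, by omega⟩
    refine ⟨r * (c * r) ^ k, ?_⟩
    have : c * (c * r) ^ (k + 1) = (c * c) * (r * (c * r) ^ k) := by
      rw [pow_succ']; simp [mul_assoc]
    rw [← this, hcf]

lemma aux_powL (c q : M) (hq : q * (c * c) = c) :
    ∀ k, q ^ k * c ^ (k + 1) = c := by
  intro k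
  induction k with
  | zero => simp
  | succ k ih =>
    have : q ^ (k + 1) * c ^ (k + 2) = q * (q ^ k * c ^ (k + 1) * c) := by
      rw [pow_succ', pow_succ]
      simp [mul_assoc]
    rw [this, ih]
    exact hq

lemma aux_powR (c s : M) (hs : (c * c) * s = c) :
    ∀ k, c ^ (k + 1) * s ^ k = c := by
  intro k
  induction k with
  | zero => simp
  | succ k ih =>
    have h1 : c ^ (k + 2) * s ^ (k + 1) = c * (c ^ (k + 1) * s ^ k) * s := by
      rw [pow_succ (s), pow_succ' (c)]
      simp [mul_assoc]
    rw [h1, ih, hs]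

end Aux

section Trans
variable {S : Type*} [Semigroup S]

lemma aux_transR (a b : S) (h : ∃ u : WithOne S, (a : WithOne S) * u = b) :
    a = b ∨ ∃ u : S, a * u = b := by
  obtain ⟨u, hu⟩ := h
  rcases u with _ | v
  · left
    have h' : (a : WithOne S) * (1 : WithOne S) = b := hu
    rw [mul_one] at h'
    exact WithOne.coe_inj.mp h'
  · right
    refine ⟨v, WithOne.coe_inj.mp ?_⟩
    have h' : (a : WithOne S) * (v : WithOne S) = b := hu
    rw [← WithOne.coe_mul] at h'
    exact h'

lemma aux_transL (a b : S) (h : ∃ u : WithOne S, u * (a : WithOne S) = b) :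
    a = b ∨ ∃ u : S, u * a = b := by
  obtain ⟨u, hu⟩ := h
  rcases u with _ | v
  · left
    have h' : (1 : WithOne S) * (a : WithOne S) = b := hu
    rw [one_mul] at h'
    exact WithOne.coe_inj.mp h'
  · right
    refine ⟨v, WithOne.coe_inj.mp ?_⟩
    have h' : (v : WithOne S) * (a : WithOne S) = b := hu
    rw [← WithOne.coe_mul] at h'
    exact h'

lemma aux_liftL (a b : S) (h : a = b ∨ ∃ u : S, u * a = b) :
    ∃ u : WithOne S, u * (a : WithOne S) = b := by
  rcases h with rfl | ⟨u, hu⟩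
  · exact ⟨1, one_mul _⟩
  · exact ⟨(u : WithOne S), by rw [← WithOne.coe_mul, hu]⟩

lemma aux_liftR (a b : S) (h : a = b ∨ ∃ u : S, a * u = b) :
    ∃ u : WithOne S, (a : WithOne S) * u = b := by
  rcases h with rfl | ⟨u, hu⟩
  · exact ⟨1, mul_one _⟩
  · exact ⟨(u : WithOne S), by rw [← WithOne.coe_mul, hu]⟩

lemma aux_coe_pow (c : S) : ∀ k, ∃ e : S, ((c : WithOne S)) ^ (k + 1) = (e : WithOne S)
  | 0 => ⟨c, pow_one _⟩
  | k + 1 => by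
    obtain ⟨e, he⟩ := aux_coe_pow c k
    exact ⟨e * c, by rw [pow_succ, he, WithOne.coe_mul]⟩

end Trans

/-- In a finite semigroup, if `c D c²` then `c H c²` and the `H`-class of `c`
is a group (contains an idempotent). -/
theorem stmt1 {S : Type*} [Semigroup S] [Fintype S] (c : S)
    (h : GreenD c (c * c)) :
    GreenH c (c * c) ∧ ∃ e : S, GreenH c e ∧ e * e = e := by
  haveI : Finite (WithOne S) := inferInstanceAs (Finite (Option S))
  obtain ⟨d, hLcd, hRd⟩ := h
  obtain ⟨p, hp⟩ : ∃ p : WithOne S, p * (d : WithOne S) = c := aux_liftL d c hLcd.2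
  obtain ⟨r, hr⟩ : ∃ r : WithOne S, ((c * c : S) : WithOne S) * r = d := aux_liftR _ d hRd.2
  rw [WithOne.coe_mul] at hr
  set c' : WithOne S := (c : WithOne S) with hc'
  have hkey : c' = p * c' * c' * r := by
    rw [mul_assoc p c' c', mul_assoc p (c' * c') r, hr, hp]
  obtain ⟨⟨q, hq⟩, ⟨s, hs⟩⟩ := aux_main c' p r hkey
  have hHcc : GreenH c (c * c) := by
    refine ⟨⟨Or.inr ⟨c, rfl⟩, ?_⟩, ⟨Or.inr ⟨c, rfl⟩, ?_⟩⟩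
    · exact aux_transR (c * c) c ⟨s, by rw [WithOne.coe_mul]; exact hs⟩
    · exact aux_transL (c * c) c ⟨q, by rw [WithOne.coe_mul]; exact hq⟩
  refine ⟨hHcc, ?_⟩
  obtain ⟨n, hn, hidem⟩ := aux_exists_idem_pow c'
  obtain ⟨k, rfl⟩ : ∃ k, n = k + 1 := ⟨n - 1, by omega⟩
  obtain ⟨e, he⟩ := aux_coe_pow c k
  refine ⟨e, ⟨⟨?_, ?_⟩, ⟨?_, ?_⟩⟩, ?_⟩
  · exact aux_transR c e ⟨c' ^ k, by rw [← pow_succ', he]⟩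
  · exact aux_transR e c ⟨s ^ k, by rw [← he]; exact aux_powR c' s hs k⟩
  · exact aux_transL c e ⟨c' ^ k, by rw [← pow_succ, he]⟩
  · exact aux_transL e c ⟨q ^ k, by rw [← he]; exact aux_powL c' q hq k⟩
  · have : ((e * e : S) : WithOne S) = (e : WithOne S) := by
      rw [WithOne.coe_mul, ← he, hidem]
    exact WithOne.coe_inj.mp this
end

section
/- Let R = {q_1, ..., q_n} be a finite right zero semigroup with n > 1. Then the dual Cayley automaton semigroup C*(R) is a free semigroup of rank n. -/
/-- Prepend a whole list to a sequence. -/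
def appendSeq {S : Type*} : List S → (ℕ → S) → ℕ → S
  | [], a => a
  | x :: t, a => consSeq x (appendSeq t a)

lemma dualAct_eq_cons {S : Type*} [Semigroup S] (hz : ∀ x y : S, x * y = y) (s : S) :
    dualAct s = consSeq s := by
  funext a n
  cases n with
  | zero => simp [dualAct, stateAt, consSeq, hz]
  | succ n => simp [dualAct, stateAt, consSeq, hz]

lemma appendSeq_append {S : Type*} (u v : List S) (a : ℕ → S) :
    appendSeq (u ++ v) a = appendSeq u (appendSeq v a) := by
  induction u with
  | nil => rfl
  | cons x t ih => simp [appendSeq, ih]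

lemma applyList_eq {S : Type*} [Semigroup S] (hz : ∀ x y : S, x * y = y) (l : List S)
    (a : ℕ → S) : applyList l a = appendSeq l.reverse a := by
  induction l generalizing a with
  | nil => rfl
  | cons s t ih =>
      have h1 : applyList (s :: t) a = applyList t (consSeq s a) := by
        show applyList t (dualAct s a) = _
        rw [dualAct_eq_cons hz]
      rw [h1, ih]
      rw [show (s :: t).reverse = t.reverse ++ [s] by simp,
        appendSeq_append]
      rfl

lemma appendSeq_inj {S : Type*} (c c' : S) (hcc : c ≠ c') :
    ∀ u v : List S, (∀ a, appendSeq u a = appendSeq v a) → u = v := by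
  intro u
  induction u with
  | nil =>
      intro v h
      cases v with
      | nil => rfl
      | cons y s =>
          exfalso
          have h1 := congrFun (h (fun _ => c)) 0
          have h2 := congrFun (h (fun _ => c')) 0
          simp [appendSeq, consSeq] at h1 h2
          exact hcc (h1.trans h2.symm)
  | cons x t ih =>
      intro v h
      cases v with
      | nil =>
          exfalso
          have h1 := congrFun (h (fun _ => c)) 0
          have h2 := congrFun (h (fun _ => c')) 0
          simp [appendSeq, consSeq] at h1 h2
          exact hcc (h1.symm.trans h2)
      | cons y s =>
          have hx : x = y := by
            have := congrFun (h (fun _ => c)) 0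
            simpa [appendSeq, consSeq] using this
          have ht : t = s := by
            apply ih
            intro a
            funext n
            have := congrFun (h a) (n + 1)
            simpa [appendSeq, consSeq] using this
          rw [hx, ht]

/-- For a finite right zero semigroup `R` with `|R| > 1`, the dual Cayley automaton
semigroup `C*(R)` is free of rank `|R|`: the map sending a nonempty word over `R`
to the corresponding product of states (transformations of `R^∞`) is injective. -/
theorem stmt5 {R : Type*} [Fintype R] [Semigroup R]
    (hz : ∀ x y : R, x * y = y) (hcard : 1 < Fintype.card R) :
    ∀ l₁ l₂ : List R, l₁ ≠ [] → l₂ ≠ [] →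
      applyList l₁ = applyList l₂ → l₁ = l₂ := by
  obtain ⟨c, c', hcc⟩ := Fintype.exists_pair_of_one_lt_card hcard
  intro l₁ l₂ _ _ h
  have key : l₁.reverse = l₂.reverse := by
    apply appendSeq_inj c c' hcc
    intro a
    rw [← applyList_eq hz, ← applyList_eq hz, h]
  simpa using congrArg List.reverse key
end

section
/- Let S be a finite semigroup and s, t ∈ S. The states s̄ and t̄ of the dual Cayley automaton C*(S) induce the same transformation of S^∞ if and only if the right translation maps ρ_s and ρ_t coincide, where ρ_s(x) = xs. -/
/-- Two states of the dual Cayley automaton induce the same transformation of `S^∞`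
iff the corresponding right translations coincide. -/
theorem stmt7 {S : Type*} [Semigroup S] [Fintype S] (s t : S) :
    dualAct s = dualAct t ↔ (fun x : S => x * s) = (fun x : S => x * t) := by
  constructor
  · intro h
    funext x
    have := congrFun (congrFun h (fun _ => x)) 0
    simpa [dualAct, stateAt] using this
  · intro h
    have key : ∀ (a : ℕ → S) (n : ℕ) (x : S),
        x * stateAt s a n = x * stateAt t a n := by
      intro a n
      induction n with
      | zero => intro x; exact congrFun h x
      | succ n ih =>
        intro x
        simp only [stateAt, ← mul_assoc]
        rw [ih x]
    funext a n
    simp only [dualAct]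
    exact key a n (a n)
end

section
/- Let G be a non-trivial finite group. Then the dual Cayley automaton semigroup C*(G) is infinite. -/
lemma myStateAt {G : Type*} [Group G] (g : G) (α : ℕ → ℕ) :
    ∀ n, stateAt g (fun t => g ^ α t) n = g ^ (1 + ∑ s ∈ Finset.range n, α s)
  | 0 => by simp [stateAt]
  | n + 1 => by
    rw [stateAt, myStateAt g α n, Finset.sum_range_succ, ← pow_add, ← add_assoc]

lemma myHockey (k : ℕ) :
    ∀ n, 1 + ∑ s ∈ Finset.range n, Nat.choose (k + s) (s + 1) = Nat.choose (k + n) n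
  | 0 => by simp
  | n + 1 => by
    rw [Finset.sum_range_succ, ← add_assoc, myHockey k n,
      show k + (n + 1) = (k + n) + 1 from rfl, Nat.choose_succ_succ]

lemma myIter {G : Type*} [Group G] (g : G) :
    ∀ k, (dualAct g)^[k] (fun _ => (1 : G)) = fun t => g ^ Nat.choose (k + t) (t + 1)
  | 0 => by
    funext t
    simp [Nat.choose_eq_zero_of_lt (Nat.lt_succ_self t)]
  | k + 1 => by
    rw [Function.iterate_succ_apply', myIter g k]
    funext t
    show (g ^ Nat.choose (k + t) (t+1)) * stateAt g _ t = _
    rw [myStateAt g (fun s => Nat.choose (k + s) (s + 1)) t, myHockey, ← pow_add]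
    congr 1
    rw [show k + 1 + t = (k + t) + 1 by omega, Nat.choose_succ_succ]
    simp only [Nat.succ_eq_add_one]
    omega

lemma myEndPow {β : Type*} (f : Function.End β) : ∀ n, (f ^ n : Function.End β) = f^[n]
  | 0 => rfl
  | n + 1 => by
    rw [pow_succ]
    show (f ^ n) ∘ f = f^[n] ∘ f
    rw [myEndPow f n]

lemma myPowMem {M : Type*} [Monoid M] (S : Subsemigroup M) {a : M} (h : a ∈ S) :
    ∀ n : ℕ, a ^ (n + 1) ∈ S
  | 0 => by simpa using h
  | n + 1 => by
    rw [pow_succ]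
    exact S.mul_mem (myPowMem S h n) h

lemma myKey {p : ℕ} (hp : p.Prime) (j k : ℕ)
    (h : ∀ t, ((j + 1 + t).choose (t + 1) : ZMod p) = ((k + 1 + t).choose (t + 1) : ZMod p)) :
    j = k := by
  haveI : Fact p.Prime := ⟨hp⟩
  have hmk : (PowerSeries.mk fun u => ((j + u).choose j : ZMod p)) =
      (PowerSeries.mk fun u => ((k + u).choose k : ZMod p)) := by
    ext u
    simp only [PowerSeries.coeff_mk]
    cases u with
    | zero => simp
    | succ t =>
      have e1 : (j + (t + 1)).choose j = (j + 1 + t).choose (t + 1) := by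
        rw [Nat.choose_symm_add, show j + (t + 1) = j + 1 + t by omega]
      have e2 : (k + (t + 1)).choose k = (k + 1 + t).choose (t + 1) := by
        rw [Nat.choose_symm_add, show k + (t + 1) = k + 1 + t by omega]
      rw [e1, e2]
      exact h t
  have hu : PowerSeries.invOneSubPow (ZMod p) (j + 1) =
      PowerSeries.invOneSubPow (ZMod p) (k + 1) := by
    apply Units.ext
    rw [PowerSeries.invOneSubPow_val_succ_eq_mk_add_choose,
      PowerSeries.invOneSubPow_val_succ_eq_mk_add_choose]
    exact hmk
  have hinv := congrArg Units.inv hu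
  rw [PowerSeries.invOneSubPow_inv_eq_one_sub_pow,
    PowerSeries.invOneSubPow_inv_eq_one_sub_pow] at hinv
  have hpoly : ((1 - Polynomial.X : Polynomial (ZMod p)) ^ (j + 1)) =
      (1 - Polynomial.X : Polynomial (ZMod p)) ^ (k + 1) := by
    apply Polynomial.coe_injective
    show Polynomial.toPowerSeries _ = Polynomial.toPowerSeries _
    push_cast
    exact hinv
  have hneg : (1 - Polynomial.X : Polynomial (ZMod p)) = -(Polynomial.X - Polynomial.C 1) := by
    rw [Polynomial.C_1]; ring
  have hlc : (1 - Polynomial.X : Polynomial (ZMod p)).leadingCoeff = -1 := by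
    rw [hneg, Polynomial.leadingCoeff_neg, (Polynomial.monic_X_sub_C (1 : ZMod p)).leadingCoeff]
  have hnd : (1 - Polynomial.X : Polynomial (ZMod p)).natDegree = 1 := by
    rw [hneg, Polynomial.natDegree_neg, Polynomial.natDegree_X_sub_C]
  have hne : ∀ n : ℕ, (1 - Polynomial.X : Polynomial (ZMod p)).leadingCoeff ^ n ≠ 0 := by
    intro n
    rw [hlc]
    exact pow_ne_zero _ (neg_ne_zero.mpr one_ne_zero)
  have hdeg := congrArg Polynomial.natDegree hpoly
  rw [Polynomial.natDegree_pow' (hne (j + 1)), Polynomial.natDegree_pow' (hne (k + 1)),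
    hnd] at hdeg
  omega

def myEl {G : Type*} [Group G] (g : G) : Function.End (ℕ → G) := dualAct g


/-- For a non-trivial finite group `G`, the dual Cayley automaton semigroup
`C*(G)` is infinite. -/
theorem stmt11 {G : Type*} [Group G] [Fintype G] [Nontrivial G] :
    (dualCayley G : Set (Function.End (ℕ → G))).Infinite := by
  have h1 : Fintype.card G ≠ 1 := Fintype.one_lt_card.ne'
  have hp : (Fintype.card G).minFac.Prime := Nat.minFac_prime h1
  haveI : Fact (Fintype.card G).minFac.Prime := ⟨hp⟩
  obtain ⟨g, hg⟩ := exists_prime_orderOf_dvd_card (Fintype.card G).minFac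
    (Fintype.card G).minFac_dvd
  refine Set.infinite_of_injective_forall_mem
    (f := fun k : ℕ => myEl g ^ (k + 1)) ?_ ?_
  · intro j k hjk
    simp only at hjk
    have hfun : (dualAct g)^[j + 1] = (dualAct g)^[k + 1] := by
      rw [show dualAct g = (myEl g : (ℕ → G) → (ℕ → G)) from rfl, ← myEndPow (myEl g),
        ← myEndPow (myEl g)]
      exact hjk
    have h2 : (fun t => g ^ Nat.choose (j + 1 + t) (t + 1)) =
        (fun t => g ^ Nat.choose (k + 1 + t) (t + 1)) := by
      rw [← myIter g (j + 1), ← myIter g (k + 1), hfun]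
    apply myKey hp
    intro t
    have h3 := congrFun h2 t
    rw [pow_eq_pow_iff_modEq, hg] at h3
    exact (ZMod.natCast_eq_natCast_iff _ _ _).mpr h3
  · intro k
    exact myPowMem (dualCayley G) (Subsemigroup.subset_closure (Set.mem_range_self g)) k
end

section
/- Let S be a finite semigroup whose dual Cayley automaton semigroup C*(S) is finite. Then S is H-trivial (every H-class of S is a singleton). -/
namespace Stmt12Aux

variable {S : Type*} [Semigroup S]

/-- `pw p n = p^(n+1)` -/
def pw (p : S) : ℕ → S
  | 0 => p
  | n + 1 => pw p n * p

/-- `qw q n = q^(n+1)` built on the left -/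
def qw (q : S) : ℕ → S
  | 0 => q
  | n + 1 => q * qw q n

lemma pw_add (p : S) (m n : ℕ) : pw p m * pw p n = pw p (m + n + 1) := by
  induction n with
  | zero => rfl
  | succ n ih =>
      show pw p m * (pw p n * p) = pw p (m + n + 1 + 1)
      rw [← mul_assoc, ih]; rfl

lemma pw_comm (p : S) (n : ℕ) : p * pw p n = pw p n * p := by
  induction n with
  | zero => rfl
  | succ n ih =>
      show p * (pw p n * p) = pw p (n+1) * p
      rw [← mul_assoc, ih]; rfl

section NoConsec

variable {a b p q r : S} (hp : a * p = b) (hq : b * q = a) (hr : r * a = b)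

/-- membership in `S¹ a` -/
def T (a : S) (x : S) : Prop := x = a ∨ ∃ u, u * a = x

include hp hq hr in
lemma cancelT : ∀ x, T a x → x * p * q = x := by
  rintro x (rfl | ⟨u, rfl⟩)
  · rw [hp, hq]
  · rw [mul_assoc, mul_assoc, ← mul_assoc a, hp, hq]

include hp hr in
lemma closT : ∀ x, T a x → T a (x * p) := by
  rintro x (rfl | ⟨u, rfl⟩)
  · rw [hp]; exact Or.inr ⟨r, hr⟩
  · rw [mul_assoc, hp, ← hr, ← mul_assoc]
    exact Or.inr ⟨u * r, rfl⟩

include hp hr in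
lemma closT_pw : ∀ n x, T a x → T a (x * pw p n) := by
  intro n
  induction n with
  | zero => exact fun x hx => closT hp hr x hx
  | succ n ih =>
      intro x hx
      have : x * pw p (n+1) = (x * pw p n) * p := by
        show x * (pw p n * p) = _
        rw [mul_assoc]
      rw [this]
      exact closT hp hr _ (ih x hx)

include hp hq hr in
lemma cancel_pw : ∀ n x, T a x → (x * pw p n) * qw q n = x := by
  intro n
  induction n with
  | zero => exact fun x hx => cancelT hp hq hr x hx
  | succ n ih =>
      intro x hx
      have h1 : x * pw p (n+1) = ((x * pw p n) * p) := by
        show x * (pw p n * p) = _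
        rw [mul_assoc]
      show (x * pw p (n+1)) * (q * qw q n) = x
      rw [h1, ← mul_assoc, cancelT hp hq hr _ (closT_pw hp hr n x hx)]
      exact ih x hx

include hp hq hr in
lemma no_consec (hab : a ≠ b) : ∀ m, pw p m ≠ pw p (m + 1) := by
  intro m heq
  have hTa : T a a := Or.inl rfl
  have hTb : T a b := Or.inr ⟨r, hr⟩
  have h1 : a * pw p m * qw q m = a := cancel_pw hp hq hr m a hTa
  have h2 : a * pw p (m+1) = b * pw p m := by
    show a * (pw p m * p) = _
    rw [← pw_comm, ← mul_assoc, hp]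
  have h3 : b * pw p m * qw q m = b := cancel_pw hp hq hr m b hTb
  apply hab
  calc a = a * pw p m * qw q m := h1.symm
    _ = a * pw p (m+1) * qw q m := by rw [heq]
    _ = b * pw p m * qw q m := by rw [h2]
    _ = b := h3

end NoConsec


lemma keyA [Fintype S] {a b p q r : S} (hp : a * p = b) (hq : b * q = a) (hr : r * a = b)
    (hab : a ≠ b) :
    ∃ d : ℕ, 2 ≤ d ∧ ∃ φ : ZMod d → S,
      (∀ c c', φ c * φ c' = φ (c + c')) ∧ Function.Injective φ := by
  classical
  obtain ⟨i, j, hne, heq⟩ := Finite.exists_ne_map_eq_of_infinite (pw p)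
  have hex : ∃ t, 0 < t ∧ ∃ m, pw p m = pw p (m + t) := by
    rcases Nat.lt_or_ge i j with hij | hij
    · exact ⟨j - i, by omega, i, by rw [show i + (j-i) = j by omega]; exact heq⟩
    · have hij' : j < i := by omega
      exact ⟨i - j, by omega, j, by rw [show j + (i-j) = i by omega]; exact heq.symm⟩
  set d := Nat.find hex with hd_def
  obtain ⟨hdpos, m0, hm0⟩ := Nat.find_spec hex
  rw [← hd_def] at hm0
  have hmin : ∀ t, t < d → ¬ (0 < t ∧ ∃ m, pw p m = pw p (m + t)) :=
    fun t ht => Nat.find_min hex ht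
  have hd2 : 2 ≤ d := by
    rcases Nat.lt_or_ge d 2 with h | h
    · exfalso
      have hd1 : d = 1 := by omega
      rw [hd1] at hm0
      exact no_consec hp hq hr hab m0 hm0
    · exact h
  have hprop : ∀ n, pw p (m0 + n) = pw p (m0 + n + d) := by
    intro n; induction n with
    | zero => simpa using hm0
    | succ n ih =>
        rw [show m0 + (n+1) + d = (m0 + n + d) + 1 by omega]
        show pw p (m0+n) * p = pw p (m0+n+d) * p
        rw [ih]
  have hmult : ∀ j n, pw p (m0 + n) = pw p (m0 + n + j * d) := by
    intro j; induction j with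
    | zero => intro n; simp
    | succ j ih =>
        intro n
        calc pw p (m0 + n) = pw p (m0 + n + j * d) := ih n
          _ = pw p (m0 + (n + j * d)) := by rw [show m0 + n + j*d = m0 + (n + j*d) by omega]
          _ = pw p (m0 + (n + j * d) + d) := hprop _
          _ = pw p (m0 + n + (j+1) * d) := by
              rw [Nat.succ_mul, show m0 + (n + j*d) + d = m0 + n + (j*d + d) by omega]
  have hwin : ∀ x y, x < y → y < x + d → pw p x ≠ pw p y := by
    intro x y h1 h2 heq'
    exact hmin (y - x) (by omega)
      ⟨by omega, x, by rw [show x + (y - x) = y by omega]; exact heq'⟩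
  have hcong : ∀ x y, m0 ≤ x → m0 ≤ y → x % d = y % d → pw p x = pw p y := by
    have haux : ∀ x y, m0 ≤ x → x ≤ y → x % d = y % d → pw p x = pw p y := by
      intro x y hx hxy hmod
      obtain ⟨j, hj⟩ := (Nat.modEq_iff_dvd' hxy).mp hmod
      have hy : y = x + j * d := by rw [Nat.mul_comm]; omega
      have hm := hmult j (x - m0)
      rw [show m0 + (x - m0) = x by omega] at hm
      rw [show x + j * d = y by omega] at hm
      exact hm
    intro x y hx hy hmod
    rcases le_total x y with h | h
    · exact haux x y hx h hmod
    · exact (haux y x hy h hmod.symm).symm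
  have hKex : ∃ K, m0 ≤ K ∧ d ∣ (K + 1) := by
    obtain ⟨X, hX⟩ : ∃ X, X = (m0 + 1) * d := ⟨_, rfl⟩
    have h1 : (m0 + 1) * 2 ≤ X := by rw [hX]; exact Nat.mul_le_mul_left _ hd2
    have h2 : d ∣ X := by rw [hX]; exact dvd_mul_left d (m0+1)
    exact ⟨X - 1, by omega, by rw [show X - 1 + 1 = X by omega]; exact h2⟩
  obtain ⟨K, hKm0, hKdvd⟩ := hKex
  haveI : NeZero d := ⟨by omega⟩
  refine ⟨d, hd2, fun c => pw p (K + c.val), ?_, ?_⟩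
  · intro c c'
    show pw p (K + c.val) * pw p (K + c'.val) = pw p (K + (c + c').val)
    rw [pw_add]
    apply hcong _ _ (by omega) (by omega)
    show (K + c.val + (K + c'.val) + 1) ≡ (K + (c + c').val) [MOD d]
    have h2 : ((c + c').val : ℕ) ≡ c.val + c'.val [MOD d] := by
      rw [ZMod.val_add]; exact Nat.mod_modEq _ _
    have h1 : K + 1 ≡ 0 [MOD d] := Nat.modEq_zero_iff_dvd.mpr hKdvd
    calc K + c.val + (K + c'.val) + 1
        = (K + 1) + (K + (c.val + c'.val)) := by omega
      _ ≡ 0 + (K + (c.val + c'.val)) [MOD d] := h1.add_right _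
      _ = K + (c.val + c'.val) := Nat.zero_add _
      _ ≡ K + (c + c').val [MOD d] := (Nat.ModEq.add_left K h2).symm
  · intro c c' heq'
    by_contra hne'
    have hv : c.val ≠ c'.val := fun hv => hne' (ZMod.val_injective d hv)
    have hlt : c.val < d := ZMod.val_lt c
    have hlt' : c'.val < d := ZMod.val_lt c'
    simp only [] at heq'
    rcases Nat.lt_or_ge c.val c'.val with h | h
    · exact hwin (K + c.val) (K + c'.val) (by omega) (by omega) heq'
    · exact hwin (K + c'.val) (K + c.val) (by omega) (by omega) heq'.symm

section Machine

/-- prefix sums -/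
def Pref {d : ℕ} (c : ℕ → ZMod d) : ℕ → ZMod d := fun n => ∑ i ∈ Finset.range (n+1), c i

/-- difference operator, inverse to `Pref` -/
def Dif {d : ℕ} (c : ℕ → ZMod d) : ℕ → ZMod d
  | 0 => c 0
  | n + 1 => c (n+1) - c n

lemma Pref_Dif {d : ℕ} (c : ℕ → ZMod d) : Pref (Dif c) = c := by
  funext n
  induction n with
  | zero => show ∑ i ∈ Finset.range 1, Dif c i = c 0; simp [Dif]
  | succ n ih =>
      show ∑ i ∈ Finset.range (n+1+1), Dif c i = c (n+1)
      rw [Finset.sum_range_succ]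
      have h : ∑ i ∈ Finset.range (n+1), Dif c i = c n := ih
      rw [h]
      show c n + (c (n+1) - c n) = c (n+1)
      ring

lemma Pref_Dif_iter {d : ℕ} : ∀ k (c : ℕ → ZMod d), Pref^[k] (Dif^[k] c) = c := by
  intro k
  induction k with
  | zero => intro c; rfl
  | succ k ih =>
      intro c
      rw [Function.iterate_succ_apply Pref k, Function.iterate_succ_apply' Dif k,
        Pref_Dif, ih]

lemma state_eq {d : ℕ} (φ : ZMod d → S) (hhom : ∀ c c', φ c * φ c' = φ (c + c'))
    (c : ℕ → ZMod d) :
    ∀ n, stateAt (φ 0) (fun i => φ (c i)) n = φ (∑ i ∈ Finset.range n, c i) := by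
  intro n
  induction n with
  | zero => simp [stateAt]
  | succ n ih =>
      show stateAt (φ 0) (fun i => φ (c i)) n * φ (c n) = _
      rw [ih, hhom, Finset.sum_range_succ]

lemma dual_eq {d : ℕ} (φ : ZMod d → S) (hhom : ∀ c c', φ c * φ c' = φ (c + c'))
    (c : ℕ → ZMod d) :
    dualAct (φ 0) (fun i => φ (c i)) = fun i => φ (Pref c i) := by
  funext n
  show (fun i => φ (c i)) n * stateAt (φ 0) (fun i => φ (c i)) n = φ (Pref c n)
  rw [state_eq φ hhom c n]
  show φ (c n) * φ (∑ i ∈ Finset.range n, c i) = φ (Pref c n)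
  rw [hhom]
  congr 1
  unfold Pref
  rw [Finset.sum_range_succ, add_comm]

lemma iter_eq {d : ℕ} (φ : ZMod d → S) (hhom : ∀ c c', φ c * φ c' = φ (c + c')) :
    ∀ k (c : ℕ → ZMod d),
      (dualAct (φ 0))^[k] (fun i => φ (c i)) = fun i => φ (Pref^[k] c i) := by
  intro k
  induction k with
  | zero => intro c; rfl
  | succ k ih =>
      intro c
      rw [Function.iterate_succ_apply' (dualAct (φ 0)) k, ih c, dual_eq φ hhom]
      simp only [Function.iterate_succ_apply' Pref k]

lemma hockey : ∀ t m : ℕ, (∑ i ∈ Finset.range (m+1), (t+i).choose i) = (t+1+m).choose m := by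
  intro t m
  induction m with
  | zero => simp
  | succ m ih =>
      rw [Finset.sum_range_succ, ih, show t + (m+1) = t+1+m by omega,
        show t+1+(m+1) = (t+1+m)+1 by omega, Nat.choose_succ_succ']

lemma prefT_delta {d : ℕ} :
    ∀ t m, (Pref^[t+1] (fun n => if n = 0 then (1 : ZMod d) else 0)) m
      = (((t + m).choose m : ℕ) : ZMod d) := by
  intro t
  induction t with
  | zero =>
      intro m
      show Pref _ m = _
      unfold Pref
      rw [Finset.sum_ite_eq' (Finset.range (m+1)) 0 (fun _ => (1 : ZMod d)),
        if_pos (Finset.mem_range.mpr (Nat.succ_pos m))]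
      simp [Nat.choose_self]
  | succ t ih =>
      intro m
      rw [Function.iterate_succ_apply' Pref (t+1)]
      show ∑ i ∈ Finset.range (m+1),
        (Pref^[t+1] (fun n => if n = 0 then (1 : ZMod d) else 0)) i = _
      rw [Finset.sum_congr rfl (fun i _ => ih i), ← Nat.cast_sum, hockey]

lemma choose_not_dvd (ℓ : ℕ) (hℓ : ℓ.Prime) (M : ℕ) :
    ∀ m, m < ℓ^M → ¬ ℓ ∣ (ℓ^M - 1).choose m := by
  haveI : Fact ℓ.Prime := ⟨hℓ⟩
  have hpos : 0 < ℓ^M := pow_pos hℓ.pos M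
  have key : ∀ m, m < ℓ^M → (((ℓ^M - 1).choose m : ℕ) : ZMod ℓ) = (-1)^m := by
    intro m
    induction m with
    | zero => intro _; simp
    | succ m ih =>
        intro hm
        have hm' : m < ℓ^M := by omega
        have hdvd : ℓ ∣ (ℓ^M).choose (m+1) :=
          Nat.Prime.dvd_choose_pow hℓ (by omega) (by omega)
        have hps : (ℓ^M).choose (m+1) = (ℓ^M - 1).choose m + (ℓ^M - 1).choose (m+1) := by
          conv_lhs => rw [show ℓ^M = (ℓ^M - 1) + 1 by omega]
          exact Nat.choose_succ_succ' _ m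
        have h0 : (((ℓ^M).choose (m+1) : ℕ) : ZMod ℓ) = 0 :=
          (ZMod.natCast_eq_zero_iff _ _).mpr hdvd
        rw [hps] at h0
        push_cast at h0
        rw [ih hm'] at h0
        have h1 : ((((ℓ^M - 1).choose (m+1) : ℕ)) : ZMod ℓ) = -((-1)^m) :=
          eq_neg_of_add_eq_zero_right h0
        rw [h1, pow_succ, mul_neg_one]
  intro m hm hdvd
  have h0 : (((ℓ^M - 1).choose m : ℕ) : ZMod ℓ) = 0 :=
    (ZMod.natCast_eq_zero_iff _ _).mpr hdvd
  rw [key m hm] at h0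
  exact (pow_ne_zero m (neg_ne_zero.mpr (one_ne_zero))) h0

lemma keyB (h : (dualCayley S : Set (Function.End (ℕ → S))).Finite)
    (d : ℕ) (hd2 : 2 ≤ d) (φ : ZMod d → S) (hhom : ∀ c c', φ c * φ c' = φ (c + c'))
    (hinj : Function.Injective φ) : False := by
  haveI : NeZero d := ⟨by omega⟩
  set f : Function.End (ℕ → S) := dualAct (φ 0) with hf
  have hpow_apply : ∀ (k : ℕ) (x : ℕ → S), (f^(k+1)) x = (dualAct (φ 0))^[k+1] x := by
    intro k
    induction k with
    | zero => intro x; rw [pow_one]; rfl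
    | succ k ih =>
        intro x
        rw [pow_succ]
        show (f^(k+1)) (f x) = _
        rw [ih (f x), ← Function.iterate_succ_apply (dualAct (φ 0)) (k+1) x]
  have hmem : ∀ k : ℕ, f^(k+1) ∈ dualCayley S := by
    intro k
    induction k with
    | zero => rw [pow_one]; exact Subsemigroup.subset_closure ⟨φ 0, rfl⟩
    | succ k ih =>
        rw [pow_succ]
        exact Subsemigroup.mul_mem _ ih (Subsemigroup.subset_closure ⟨φ 0, rfl⟩)
  haveI := h.to_subtype
  obtain ⟨i, j, hne, heq⟩ := Finite.exists_ne_map_eq_of_infinite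
    (fun k => (⟨f^(k+1), hmem k⟩ : (dualCayley S : Set (Function.End (ℕ → S)))))
  have heq' : f^(i+1) = f^(j+1) := congrArg Subtype.val heq
  have main : ∀ k₀ t : ℕ, f^(k₀+1) = f^(k₀+1+(t+1)) → False := by
    intro k₀ t hft
    have hiter : ∀ c : ℕ → ZMod d, Pref^[k₀+1] c = Pref^[k₀+1+(t+1)] c := by
      intro c
      have h1 : (f^(k₀+1)) (fun i => φ (c i)) = (f^(k₀+1+(t+1))) (fun i => φ (c i)) := by
        rw [hft]
      rw [hpow_apply k₀, show k₀+1+(t+1) = (k₀+t+1)+1 by omega, hpow_apply (k₀+t+1)] at h1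
      rw [iter_eq φ hhom (k₀+1) c, iter_eq φ hhom ((k₀+t+1)+1) c] at h1
      funext n
      have := congrFun h1 n
      rw [show (k₀+t+1)+1 = k₀+1+(t+1) by omega] at this
      exact hinj this
    have hPT : ∀ c : ℕ → ZMod d, Pref^[t+1] c = c := by
      intro c
      have : c = Pref^[t+1] c :=
        calc c = Pref^[k₀+1] (Dif^[k₀+1] c) := (Pref_Dif_iter (k₀+1) c).symm
          _ = Pref^[k₀+1+(t+1)] (Dif^[k₀+1] c) := hiter _
          _ = Pref^[t+1] (Pref^[k₀+1] (Dif^[k₀+1] c)) := by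
              rw [Nat.add_comm (k₀+1) (t+1), Function.iterate_add_apply]
          _ = Pref^[t+1] c := by rw [Pref_Dif_iter]
      exact this.symm
    have hℓp : d.minFac.Prime := Nat.minFac_prime (by omega)
    have hTlt : t + 1 < d.minFac^(t+1) := Nat.lt_pow_self hℓp.one_lt
    have hδ := congrFun (hPT (fun n => if n = 0 then (1 : ZMod d) else 0)) (d.minFac^(t+1) - (t+1))
    rw [prefT_delta t (d.minFac^(t+1) - (t+1)), if_neg (by omega)] at hδ
    have hd_dvd : d ∣ (t + (d.minFac^(t+1) - (t+1))).choose (d.minFac^(t+1) - (t+1)) :=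
      (ZMod.natCast_eq_zero_iff _ _).mp hδ
    have hl_dvd : d.minFac ∣ (t + (d.minFac^(t+1) - (t+1))).choose (d.minFac^(t+1) - (t+1)) :=
      dvd_trans (Nat.minFac_dvd d) hd_dvd
    rw [show t + (d.minFac^(t+1) - (t+1)) = d.minFac^(t+1) - 1 by omega] at hl_dvd
    exact choose_not_dvd d.minFac hℓp (t+1) (d.minFac^(t+1) - (t+1)) (by omega) hl_dvd
  rcases Nat.lt_or_ge i j with hij | hij
  · exact main i (j - i - 1) (by rw [show i+1+(j-i-1+1) = j+1 by omega]; exact heq')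
  · have hji : j < i := by omega
    exact main j (i - j - 1) (by rw [show j+1+(i-j-1+1) = i+1 by omega]; exact heq'.symm)

end Machine

end Stmt12Aux


/-- If `C*(S)` is finite then `S` is `H`-trivial. -/
theorem stmt12 {S : Type*} [Semigroup S] [Fintype S]
    (h : (dualCayley S : Set (Function.End (ℕ → S))).Finite) :
    ∀ a b : S, GreenH a b → a = b := by
  intro a b hH
  by_contra hab
  obtain ⟨⟨hR1, hR2⟩, ⟨hL1, hL2⟩⟩ := hH
  obtain ⟨p, hp⟩ := hR1.resolve_left hab
  obtain ⟨q, hq⟩ := hR2.resolve_left (fun e => hab e.symm)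
  obtain ⟨r, hr⟩ := hL1.resolve_left hab
  obtain ⟨d, hd2, φ, hhom, hinj⟩ := Stmt12Aux.keyA hp hq hr hab
  exact Stmt12Aux.keyB h d hd2 φ hhom hinj
end

section
/- Let S be a finite semigroup whose dual Cayley automaton semigroup C*(S) is finite. Then S contains no non-trivial right zero subsemigroup. -/
section Aux
variable {S : Type*} [Semigroup S]

lemma pow_succ_mem_subsemigroup {M : Type*} [Monoid M] (N : Subsemigroup M)
    {x : M} (hx : x ∈ N) : ∀ n : ℕ, x ^ (n + 1) ∈ N := by
  intro n
  induction n with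
  | zero => simpa using hx
  | succ k ih => rw [pow_succ]; exact N.mul_mem ih hx

lemma stateAt_mem {T : Set S} (hT : ∀ x ∈ T, ∀ y ∈ T, x * y = y)
    {e : S} (he : e ∈ T) {a : ℕ → S} (ha : ∀ n, a n ∈ T) :
    ∀ n, stateAt e a n ∈ T := by
  intro n
  induction n with
  | zero => exact he
  | succ k ih =>
    show stateAt e a k * a k ∈ T
    rw [hT _ ih _ (ha k)]; exact ha k

lemma dualAct_eq_consSeq {T : Set S} (hT : ∀ x ∈ T, ∀ y ∈ T, x * y = y)
    {e : S} (he : e ∈ T) {a : ℕ → S} (ha : ∀ n, a n ∈ T) :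
    dualAct e a = consSeq e a := by
  funext n
  cases n with
  | zero => show a 0 * e = e; exact hT _ (ha 0) _ he
  | succ k =>
    show a (k + 1) * (stateAt e a k * a k) = a k
    rw [hT _ (stateAt_mem hT he ha k) _ (ha k),
        hT _ (ha (k+1)) _ (ha k)]

end Aux

/-- If `C*(S)` is finite then `S` contains no non-trivial right zero subsemigroup. -/
theorem stmt13 {S : Type*} [Semigroup S] [Fintype S]
    (h : (dualCayley S : Set (Function.End (ℕ → S))).Finite) :
    ¬ ∃ T : Set S, (∀ x ∈ T, ∀ y ∈ T, x * y = y) ∧ ∃ x ∈ T, ∃ y ∈ T, x ≠ y := by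

  rintro ⟨T, hT, e, he, f, hf, hef⟩
  set D : Function.End (ℕ → S) := dualAct e with hD
  -- the "k e's then f's" sequence
  set seq : ℕ → ℕ → S := fun k n => if n < k then e else f with hseq
  have hseqT : ∀ k n, seq k n ∈ T := by
    intro k n; by_cases hn : n < k <;> simp [hseq, hn, he, hf]
  have hcons : ∀ k, consSeq e (seq k) = seq (k + 1) := by
    intro k; funext n
    cases n with
    | zero => simp [consSeq, hseq]
    | succ m => simp [consSeq, hseq, Nat.succ_lt_succ_iff]
  have key : ∀ k : ℕ, (D ^ (k + 1)) (seq 0) = seq (k + 1) := by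
    intro k
    induction k with
    | zero =>
      show dualAct e (seq 0) = seq 1
      rw [dualAct_eq_consSeq hT he (hseqT 0), hcons]
    | succ m ih =>
      rw [pow_succ' D (m + 1)]
      show dualAct e ((D ^ (m + 1)) (seq 0)) = seq (m + 2)
      rw [ih, dualAct_eq_consSeq hT he (hseqT (m + 1)), hcons]
  have hmem : ∀ k : ℕ, D ^ (k + 1) ∈ dualCayley S := by
    intro k
    exact pow_succ_mem_subsemigroup _ (Subsemigroup.subset_closure (Set.mem_range_self e)) k
  have hseq_inj : Function.Injective seq := by
    intro a b hab
    by_contra hne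
    rcases Nat.lt_or_ge a b with hlt | hge
    · have := congrFun hab a
      simp [hseq, hlt] at this
      exact hef this.symm
    · have hlt : b < a := lt_of_le_of_ne hge (Ne.symm hne)
      have := congrFun hab b
      simp [hseq, hlt] at this
      exact hef this
  have hinj : Function.Injective (fun k : ℕ => D ^ (k + 1)) := by
    intro a b hab
    have : seq (a + 1) = seq (b + 1) := by
      rw [← key a, ← key b]
      exact congrFun (congrArg (fun g : Function.End (ℕ → S) => (g : (ℕ → S) → (ℕ → S))) hab) (seq 0)
    simpa using hseq_inj this
  exact (Set.infinite_of_injective_forall_mem hinj (fun k => hmem k)) h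
end
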